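/- Let ψ : ℚ[T,X,Y] → ℚ[x,y,z] be the ℚ-algebra homomorphism determined by T ↦ 4z + 2y − x, X ↦ y(y − x) + (z/2)(7y + 7z − 3x), Y ↦ (z/2)(y − x + z). Then for every integer ℓ ≥ 0, ψ(∏_{i=0}^{ℓ}((2i+1)²·((i(i+1)/2)(X + Y) − Y) − (i²(i+1)²/2)·T²)) = (−1/2)^{ℓ+1} · z · (z − (ℓ+1)²x + (ℓ+1)y) · ∏_{i=1}^{ℓ}(z − i²x + iy)(z − i²x − iy) in ℚ[x,y,z]. In particular the relation ∏_{i=0}^{ℓ}((2i+1)²((i(i+1)/2)(X+Y) − Y) − (i²(i+1)²/2)T²) is mapped to a polynomial multiple of z·∏_{i=1}^{ℓ}(z − i²x + iy)(z − i²x − iy). -/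

import Mathlib

open MvPolynomial Finset

/-- The ℚ-algebra homomorphism ℚ[T,X,Y] → ℚ[x,y,z] (with `T = X 0, X = X 1, Y = X 2`
in the source and `x = X 0, y = X 1, z = X 2` in the target) determined by
`T ↦ 4z + 2y − x`, `X ↦ y(y − x) + (z/2)(7y + 7z − 3x)`, `Y ↦ (z/2)(y − x + z)`. -/
noncomputable def psi : MvPolynomial (Fin 3) ℚ →ₐ[ℚ] MvPolynomial (Fin 3) ℚ :=
  aeval ![4 * X 2 + 2 * X 1 - X 0,
          X 1 * (X 1 - X 0) + C (1/2 : ℚ) * X 2 * (7 * X 1 + 7 * X 2 - 3 * X 0),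
          C (1/2 : ℚ) * X 2 * (X 1 - X 0 + X 2)]

lemma psi_key (a : ℚ) :
    psi (C ((2 * a + 1) ^ 2) * (C (a * (a + 1) / 2) * (X 1 + X 2) - X 2) -
        C (a ^ 2 * (a + 1) ^ 2 / 2) * X 0 ^ 2) =
      C (-(1/2) : ℚ) *
        ((X 2 - C ((a + 1) ^ 2) * X 0 + C (a + 1) * X 1) *
          (X 2 - C (a ^ 2) * X 0 - C a * X 1)) := by
  apply MvPolynomial.funext
  intro v
  simp only [psi, map_sub, map_mul, map_add, map_pow, aeval_X, aeval_C,
    Matrix.cons_val_zero, Matrix.cons_val_one, Matrix.head_cons, Matrix.cons_val_two,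
    Matrix.tail_cons, MvPolynomial.algebraMap_eq, eval_X, eval_C, eval_mul, eval_add,
    eval_sub, eval_pow, eval_ofNat]
  ring

/-- For every `ℓ ≥ 0`:
`ψ(∏_{i=0}^{ℓ}((2i+1)²·((i(i+1)/2)(X + Y) − Y) − (i²(i+1)²/2)·T²))
 = (−1/2)^{ℓ+1}·z·(z − (ℓ+1)²x + (ℓ+1)y)·∏_{i=1}^{ℓ}(z − i²x + iy)(z − i²x − iy)`;
in particular the relation of `H*(BG¹_μ;ℚ)` is mapped to a polynomial multiple of
the relation `z·∏_{i=1}^{ℓ}(z − i²x + iy)(z − i²x − iy)` of `H*(BG̃¹_{μ,c};ℚ)`. -/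
theorem psi_maps_relation (ℓ : ℕ) :
    psi (∏ i ∈ Finset.range (ℓ + 1),
        (C ((2 * (i : ℚ) + 1) ^ 2) *
            (C ((i : ℚ) * ((i : ℚ) + 1) / 2) * (X 1 + X 2) - X 2) -
          C ((i : ℚ) ^ 2 * ((i : ℚ) + 1) ^ 2 / 2) * X 0 ^ 2)) =
      C (-(1/2) : ℚ) ^ (ℓ + 1) *
        (X 2 * (X 2 - C (((ℓ : ℚ) + 1) ^ 2) * X 0 + C ((ℓ : ℚ) + 1) * X 1) *
          ∏ i ∈ Icc 1 ℓ,
            ((X 2 - C ((i : ℚ) ^ 2) * X 0 + C (i : ℚ) * X 1) *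
              (X 2 - C ((i : ℚ) ^ 2) * X 0 - C (i : ℚ) * X 1))) ∧
    psi (∏ i ∈ Finset.range (ℓ + 1),
        (C ((2 * (i : ℚ) + 1) ^ 2) *
            (C ((i : ℚ) * ((i : ℚ) + 1) / 2) * (X 1 + X 2) - X 2) -
          C ((i : ℚ) ^ 2 * ((i : ℚ) + 1) ^ 2 / 2) * X 0 ^ 2)) ∈
      Ideal.span {(X 2 : MvPolynomial (Fin 3) ℚ) *
          ∏ i ∈ Icc 1 ℓ,
            ((X 2 - C ((i : ℚ) ^ 2) * X 0 + C (i : ℚ) * X 1) *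
              (X 2 - C ((i : ℚ) ^ 2) * X 0 - C (i : ℚ) * X 1))} := by
  have main : ∀ n : ℕ,
      psi (∏ i ∈ Finset.range (n + 1),
        (C ((2 * (i : ℚ) + 1) ^ 2) *
            (C ((i : ℚ) * ((i : ℚ) + 1) / 2) * (X 1 + X 2) - X 2) -
          C ((i : ℚ) ^ 2 * ((i : ℚ) + 1) ^ 2 / 2) * X 0 ^ 2)) =
      C (-(1/2) : ℚ) ^ (n + 1) *
        (X 2 * (X 2 - C (((n : ℚ) + 1) ^ 2) * X 0 + C ((n : ℚ) + 1) * X 1) *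
          ∏ i ∈ Icc 1 n,
            ((X 2 - C ((i : ℚ) ^ 2) * X 0 + C (i : ℚ) * X 1) *
              (X 2 - C ((i : ℚ) ^ 2) * X 0 - C (i : ℚ) * X 1))) := by
    intro n
    induction n with
    | zero =>
        rw [Finset.range_one, Finset.prod_singleton,
          show (Icc 1 0 : Finset ℕ) = ∅ from Finset.Icc_eq_empty (by norm_num),
          Finset.prod_empty]
        push_cast
        rw [psi_key 0]
        norm_num [C_0, C_1]
        ring
    | succ n ih =>
        rw [Finset.prod_range_succ, map_mul, ih, psi_key,
          Finset.prod_Icc_succ_top (by omega)]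
        push_cast
        ring
  refine ⟨main ℓ, ?_⟩
  rw [main ℓ, Ideal.mem_span_singleton']
  exact ⟨C (-(1/2) : ℚ) ^ (ℓ + 1) * (X 2 - C (((ℓ : ℚ) + 1) ^ 2) * X 0 + C ((ℓ : ℚ) + 1) * X 1),
    by ring⟩
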